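/- Let α and β be types and p : α → β → Prop a decidable join predicate. For bag relations f : α →₀ ℕ and g : β →₀ ℕ, define: the inner join inj(f, g) : α × β →₀ ℕ by inj(f, g)(a, b) = f a * g b if p a b, else 0; the left anti-join la(f, g) : α →₀ ℕ by la(f, g)(a) = f a if no b in the support of g satisfies p a b, else 0; and the left outer join lo(f, g) : α × Option β →₀ ℕ by lo(f, g)(a, some b) = inj(f, g)(a, b) and lo(f, g)(a, none) = la(f, g)(a). Then lo(f, g) equals the sum of the image of inj(f, g) under the (injective) map (a, b) ↦ (a, some b) and the image of la(f, g) under the (injective) map a ↦ (a, none); i.e., the left outer join decomposes as the inner join plus the null-padded left anti-join. -/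

import Mathlib

/-- Inner join of two bag relations with natural-number multiplicities:
the multiplicity of `(a, b)` is `f a * g b` when `p a b` holds, else `0`. -/
noncomputable def innerJoin {α β : Type*} (p : α → β → Prop) [∀ a b, Decidable (p a b)]
    (f : α →₀ ℕ) (g : β →₀ ℕ) : α × β →₀ ℕ :=
  Finsupp.onFinset (f.support ×ˢ g.support)
    (fun ab => if p ab.1 ab.2 then f ab.1 * g ab.2 else 0)
    (fun ab hab => by
      rw [Finset.mem_product]
      simp only [Finsupp.mem_support_iff]
      try dsimp only at hab
      split_ifs at hab with h
      · exact mul_ne_zero_iff.mp hab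
      · exact absurd rfl hab)

/-- Left anti-join of two bag relations: a left tuple `a` keeps its
multiplicity `f a` if no `b` in the support of `g` satisfies `p a b`,
and gets multiplicity `0` otherwise. -/
noncomputable def leftAntiJoin {α β : Type*} (p : α → β → Prop) [∀ a b, Decidable (p a b)]
    (f : α →₀ ℕ) (g : β →₀ ℕ) : α →₀ ℕ :=
  Finsupp.onFinset f.support
    (fun a => if ∃ b ∈ g.support, p a b then 0 else f a)
    (fun a ha => by
      simp only [Finsupp.mem_support_iff]
      try dsimp only at ha
      split_ifs at ha with h
      · exact absurd rfl ha
      · exact ha)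

/-- Left outer join of two bag relations: matched pairs `(a, some b)` carry the
inner-join multiplicity, and the null-padded row `(a, none)` carries the
left anti-join multiplicity. -/
noncomputable def leftOuterJoin {α β : Type*} (p : α → β → Prop) [∀ a b, Decidable (p a b)]
    (f : α →₀ ℕ) (g : β →₀ ℕ) : α × Option β →₀ ℕ :=
  letI : DecidableEq (Option β) := Classical.decEq _
  Finsupp.onFinset (f.support ×ˢ insert none (g.support.image some))
    (fun x =>
      match x with
      | (a, some b) => if p a b then f a * g b else 0
      | (a, none) => if ∃ b ∈ g.support, p a b then 0 else f a)
    (fun x hx => by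
      rw [Finset.mem_product]
      obtain ⟨a, b⟩ := x
      cases b with
      | none =>
        refine ⟨?_, Finset.mem_insert_self _ _⟩
        simp only [Finsupp.mem_support_iff]
        intro h
        apply hx
        simp [h]
      | some b =>
        constructor
        · simp only [Finsupp.mem_support_iff]
          intro h
          apply hx
          simp [h]
        · apply Finset.mem_insert_of_mem
          rw [Finset.mem_image]
          refine ⟨b, ?_, rfl⟩
          simp only [Finsupp.mem_support_iff]
          intro h
          apply hx
          simp [h])

/-- The inter-TVR rule of the IM-2 (stream-computing) method: the left outer
join decomposes as the inner join (embedded via `(a, b) ↦ (a, some b)`) plus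
the null-padded left anti-join (embedded via `a ↦ (a, none)`). -/
theorem leftOuterJoin_eq_innerJoin_add_leftAntiJoin {α β : Type*}
    (p : α → β → Prop) [∀ a b, Decidable (p a b)] (f : α →₀ ℕ) (g : β →₀ ℕ) :
    leftOuterJoin p f g =
      Finsupp.embDomain
        ⟨fun ab : α × β => (ab.1, some ab.2),
          fun ab ab' h => by
            cases ab; cases ab'
            simpa [Prod.ext_iff] using h⟩ (innerJoin p f g) +
      Finsupp.embDomain
        ⟨fun a : α => (a, (none : Option β)),
          fun a a' h => by simpa [Prod.ext_iff] using h⟩ (leftAntiJoin p f g) := by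
  have hinj1 : Function.Injective (fun ab : α × β => ((ab.1, some ab.2) : α × Option β)) := by
    rintro ⟨x, y⟩ ⟨x', y'⟩ h
    simpa [Prod.ext_iff] using h
  have hinj2 : Function.Injective (fun a : α => ((a, (none : Option β)) : α × Option β)) := by
    intro x y h
    simpa [Prod.ext_iff] using h
  rw [Finsupp.embDomain_eq_mapDomain, Finsupp.embDomain_eq_mapDomain]
  show leftOuterJoin p f g = Finsupp.mapDomain (fun ab : α × β => ((ab.1, some ab.2) : α × Option β)) (innerJoin p f g) + Finsupp.mapDomain (fun a : α => ((a, (none : Option β)) : α × Option β)) (leftAntiJoin p f g)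
  ext ⟨a, b⟩
  rw [Finsupp.add_apply]
  cases b with
  | none =>
    have h1 : ((a, (none : Option β)) : α × Option β) ∉
        Set.range (fun ab : α × β => ((ab.1, some ab.2) : α × Option β)) := by
      rintro ⟨⟨x, y⟩, h⟩
      simp at h
    rw [Finsupp.mapDomain_notin_range _ _ h1]
    have h2 := Finsupp.mapDomain_apply hinj2 (leftAntiJoin p f g) a
    rw [h2]
    simp [leftOuterJoin, leftAntiJoin]
  | some b =>
    have h1 : ((a, some b) : α × Option β) ∉
        Set.range (fun a : α => ((a, (none : Option β)) : α × Option β)) := by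
      rintro ⟨x, h⟩
      simp at h
    rw [Finsupp.mapDomain_notin_range _ _ h1]
    have h2 := Finsupp.mapDomain_apply hinj1 (innerJoin p f g) (a, b)
    rw [h2]
    simp [leftOuterJoin, innerJoin]
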